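/- arXiv:2005.14035 — 10 statements merged into one kernel-verified Lean document; each statement's English description precedes it below -/
import Mathlib

section
/- For every c ≥ 1/2 and every t > 0, the double inequality (c/(2(1+c)))·t < log(1 + 2c·sinh(t/2)) < c·t holds. -/
theorem Fc_double_inequality (c t : ℝ) (hc : c ≥ 1 / 2) (ht : 0 < t) :
    c / (2 * (1 + c)) * t < Real.log (1 + 2 * c * Real.sinh (t / 2)) ∧
    Real.log (1 + 2 * c * Real.sinh (t / 2)) < c * t := by
  have hc0 : 0 < c := lt_of_lt_of_le (by norm_num) hc
  have hy : 0 < t / 2 := by linarith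
  set y := t / 2 with hydef
  have hsinh : 0 < Real.sinh y := Real.sinh_pos_iff.2 hy
  have harg : 0 < 1 + 2 * c * Real.sinh y := by positivity
  have hu1 : 1 < Real.exp y := Real.one_lt_exp_iff.2 hy
  have hui : Real.exp (-y) = (Real.exp y)⁻¹ := Real.exp_neg y
  have hsinh_eq : Real.sinh y = (Real.exp y - (Real.exp y)⁻¹) / 2 := by
    rw [Real.sinh_eq, hui]
  have hupos : 0 < Real.exp y := Real.exp_pos y
  constructor
  · -- lower bound
    rw [show c / (2 * (1 + c)) * t = c / (1 + c) * y by rw [hydef]; field_simp]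
    rw [Real.lt_log_iff_exp_lt harg]
    have ha0 : 0 ≤ c / (1 + c) := by positivity
    have ha1 : c / (1 + c) ≤ 1 := by
      rw [div_le_one (by linarith)]; linarith
    have hbern := rpow_one_add_le_one_add_mul_self
      (s := Real.exp y - 1) (by linarith) ha0 ha1
    have hkey : Real.exp (c / (1 + c) * y) ≤ 1 + c / (1 + c) * (Real.exp y - 1) := by
      calc Real.exp (c / (1 + c) * y) = Real.exp (y * (c / (1 + c))) := by ring_nf
        _ = Real.exp y ^ (c / (1 + c)) := Real.exp_mul y _
        _ = (1 + (Real.exp y - 1)) ^ (c / (1 + c)) := by ring_nf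
        _ ≤ 1 + c / (1 + c) * (Real.exp y - 1) := hbern
    refine lt_of_le_of_lt hkey ?_
    have hEI : Real.exp y * (Real.exp y)⁻¹ = 1 := mul_inv_cancel₀ hupos.ne'
    have hI1 : (Real.exp y)⁻¹ < 1 := inv_lt_one_of_one_lt₀ hu1
    have h2 : c / (1 + c) * (Real.exp y - 1) < 2 * c * Real.sinh y := by
      rw [hsinh_eq, div_mul_eq_mul_div, div_lt_iff₀ (by linarith : (0:ℝ) < 1 + c)]
      nlinarith [mul_pos hc0 (sub_pos.2 (lt_trans hI1 hu1)), mul_pos hc0 (sub_pos.2 hI1)]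
    linarith
  · -- upper bound
    rw [show c * t = 2 * c * y by rw [hydef]; field_simp]
    rw [Real.log_lt_iff_lt_exp harg]
    have hbern := one_add_mul_self_le_rpow_one_add
      (s := Real.exp y - 1) (by linarith) (p := 2 * c) (by linarith)
    have hkey : 1 + 2 * c * (Real.exp y - 1) ≤ Real.exp (2 * c * y) := by
      calc 1 + 2 * c * (Real.exp y - 1) ≤ (1 + (Real.exp y - 1)) ^ (2 * c) := hbern
        _ = Real.exp y ^ (2 * c) := by ring_nf
        _ = Real.exp (y * (2 * c)) := (Real.exp_mul y _).symm
        _ = Real.exp (2 * c * y) := by ring_nf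
    refine lt_of_lt_of_le ?_ hkey
    have : Real.sinh y < Real.exp y - 1 := by
      rw [hsinh_eq, div_lt_iff₀ (by norm_num : (0:ℝ) < 2)]
      nlinarith [sq_nonneg (Real.exp y - 1), mul_inv_cancel₀ hupos.ne',
        inv_pos.2 hupos]
    nlinarith
end

section
/- If c ≥ 1, then for all t > 0, (1/2)·t < log(1 + 2c·sinh(t/2)) < c·t. -/
theorem Fc_bounds_c_ge_one (c t : ℝ) (hc : 1 ≤ c) (ht : 0 < t) :
    (1 / 2) * t < Real.log (1 + 2 * c * Real.sinh (t / 2)) ∧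
    Real.log (1 + 2 * c * Real.sinh (t / 2)) < c * t := by
  set x := t / 2 with hx
  have hxpos : 0 < x := by positivity
  have hsinh : Real.sinh x = (Real.exp x - Real.exp (-x)) / 2 := Real.sinh_eq x
  have hsp : 0 < Real.sinh x := Real.sinh_pos_iff.mpr hxpos
  have hex1 : 1 < Real.exp x := Real.one_lt_exp_iff.mpr hxpos
  have henx : Real.exp (-x) < 1 := by
    rw [Real.exp_lt_one_iff]; linarith
  have hcpos : (0:ℝ) < c := lt_of_lt_of_le one_pos hc
  have hpos : (0:ℝ) < 1 + 2 * c * Real.sinh x := by positivity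
  constructor
  · -- lower bound: exp x < 1 + 2 c sinh x
    rw [show (1/2) * t = x by rw [hx]; ring]
    rw [Real.lt_log_iff_exp_lt hpos]
    have h2 : 2 * Real.sinh x ≤ 2 * c * Real.sinh x := by nlinarith
    have : Real.exp x < 1 + 2 * Real.sinh x := by
      rw [hsinh]; nlinarith
    linarith
  · -- upper bound
    rw [Real.log_lt_iff_lt_exp hpos, show c * t = 2 * x * c by rw [hx]; ring, Real.exp_mul]
    have hb := one_add_mul_self_le_rpow_one_add
      (s := Real.exp (2*x) - 1) (by nlinarith [Real.exp_pos (2*x)]) hc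
    have h1 : 1 + 2 * c * Real.sinh x < 1 + c * (Real.exp (2*x) - 1) := by
      rw [hsinh]
      have he : Real.exp (2*x) = Real.exp x * Real.exp x := by
        rw [← Real.exp_add]; ring_nf
      have hneg : Real.exp (-x) = (Real.exp x)⁻¹ := by
        rw [← Real.exp_neg]
      have hx0 : (0:ℝ) < Real.exp x := Real.exp_pos x
      -- need c*(e^x - e^{-x}) < c*(e^{2x} - 1)
      have key : Real.exp x - Real.exp (-x) < Real.exp (2*x) - 1 := by
        rw [he, hneg]
        have hinv : Real.exp x * (Real.exp x)⁻¹ = 1 := mul_inv_cancel₀ (ne_of_gt hx0)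
        nlinarith [sq_nonneg (Real.exp x - 1), mul_pos (sub_pos.mpr hex1) (sub_pos.mpr hex1)]
      nlinarith
    calc 1 + 2 * c * Real.sinh x < 1 + c * (Real.exp (2*x) - 1) := h1
      _ ≤ (1 + (Real.exp (2*x) - 1)) ^ c := hb
      _ = Real.exp (2*x) ^ c := by ring_nf
end

section
/- For c ≥ 1, the function t ↦ F_c(t)/t, where F_c(t) = log(1 + 2c·sinh(t/2)), is strictly decreasing on (0, ∞). -/
open Real Set

private lemma sinh_nonneg' {t : ℝ} (ht : 0 ≤ t) : 0 ≤ Real.sinh (t/2) := by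
  have : Real.sinh 0 ≤ Real.sinh (t/2) := by
    apply Real.sinh_le_sinh.mpr; linarith
  simpa using this

private lemma Dpos {c t : ℝ} (hc : 1 ≤ c) (ht : 0 ≤ t) :
    (0:ℝ) < 1 + 2*c*Real.sinh (t/2) := by
  have hs := sinh_nonneg' ht
  nlinarith

private lemma logD_ge {c t : ℝ} (hc : 1 ≤ c) (ht : 0 ≤ t) :
    t/2 ≤ Real.log (1 + 2*c*Real.sinh (t/2)) := by
  have hs := sinh_nonneg' ht
  have h1 : Real.exp (t/2) ≤ 1 + 2*c*Real.sinh (t/2) := by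
    have hsinh : Real.sinh (t/2) = (Real.exp (t/2) - Real.exp (-(t/2))) / 2 :=
      Real.sinh_eq (t/2)
    have hle : Real.exp (-(t/2)) ≤ 1 := Real.exp_le_one_iff.mpr (by linarith)
    nlinarith [Real.exp_pos (-(t/2))]
  calc t/2 = Real.log (Real.exp (t/2)) := (Real.log_exp _).symm
    _ ≤ _ := Real.log_le_log (Real.exp_pos _) h1

private lemma hasDerivAt_D (c x : ℝ) :
    HasDerivAt (fun t : ℝ => 1 + 2*c*Real.sinh (t/2))
      (2*c*(Real.cosh (x/2) * (1/2))) x := by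
  have h1 : HasDerivAt (fun t : ℝ => t/2) (1/2) x := (hasDerivAt_id x).div_const 2
  have h2 : HasDerivAt (fun t : ℝ => Real.sinh (t/2)) (Real.cosh (x/2) * (1/2)) x :=
    by have := (Real.hasDerivAt_sinh (x/2)).comp x h1; exact this
  exact (h2.const_mul (2*c)).const_add 1

private lemma key_ineq {c : ℝ} (hc : 1 ≤ c) {t : ℝ} (ht : 0 < t) :
    c * t * Real.cosh (t/2) <
      (1 + 2*c*Real.sinh (t/2)) * Real.log (1 + 2*c*Real.sinh (t/2)) := by
  set K : ℝ → ℝ := fun t =>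
    (1 + 2*c*Real.sinh (t/2)) * Real.log (1 + 2*c*Real.sinh (t/2))
      - c * t * Real.cosh (t/2) with hK
  have hDK : ∀ x : ℝ, 0 < x → HasDerivAt K
      (2*c*(Real.cosh (x/2) * (1/2)) * Real.log (1 + 2*c*Real.sinh (x/2))
        + (1 + 2*c*Real.sinh (x/2)) * (2*c*(Real.cosh (x/2) * (1/2)) / (1 + 2*c*Real.sinh (x/2)))
        - (c * 1 * Real.cosh (x/2) + c * x * (Real.sinh (x/2) * (1/2)))) x := by
    intro x hx
    have hD := hasDerivAt_D c x
    have hpos := Dpos hc hx.le (t := x)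
    have hlog := hD.log hpos.ne'
    have h1 : HasDerivAt (fun t : ℝ => t/2) (1/2) x := (hasDerivAt_id x).div_const 2
    have hch : HasDerivAt (fun t : ℝ => Real.cosh (t/2)) (Real.sinh (x/2) * (1/2)) x :=
      by have := (Real.hasDerivAt_cosh (x/2)).comp x h1; exact this
    have hct : HasDerivAt (fun t : ℝ => c * t) (c * 1) x := (hasDerivAt_id x).const_mul c
    exact (hD.mul hlog).sub (hct.mul hch)
  have hmono : StrictMonoOn K (Set.Ici (0:ℝ)) := by
    apply strictMonoOn_of_deriv_pos (convex_Ici 0)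
    · have hDc : Continuous (fun t:ℝ => 1 + 2*c*Real.sinh (t/2)) := by continuity
      apply ContinuousOn.sub
      · exact hDc.continuousOn.mul
          (hDc.continuousOn.log fun x hx => (Dpos hc hx).ne')
      · exact (by continuity : Continuous fun t:ℝ => c * t * Real.cosh (t/2)).continuousOn
    · intro x hx
      rw [interior_Ici] at hx
      rw [(hDK x hx).deriv]
      have hx' : (0:ℝ) < x := hx
      have hpos := Dpos hc (le_of_lt hx') (t := x)
      have hlog := logD_ge hc (le_of_lt hx') (t := x)
      have hcs : Real.cosh (x/2) - Real.sinh (x/2) = Real.exp (-(x/2)) :=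
        Real.cosh_sub_sinh (x/2)
      have hch : (1:ℝ) ≤ Real.cosh (x/2) := Real.one_le_cosh _
      have hcancel : (1 + 2*c*Real.sinh (x/2)) *
          (2*c*(Real.cosh (x/2) * (1/2)) / (1 + 2*c*Real.sinh (x/2)))
          = c * Real.cosh (x/2) := by
        field_simp
      rw [hcancel]
      have hcc : (0:ℝ) < c * Real.cosh (x/2) := by nlinarith
      have hkey : c * Real.cosh (x/2) * (x/2)
          ≤ c * Real.cosh (x/2) * Real.log (1 + 2*c*Real.sinh (x/2)) :=
        mul_le_mul_of_nonneg_left hlog hcc.le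
      have h2 : (0:ℝ) < c * (x/2) * Real.exp (-(x/2)) := by positivity
      have h3 : c * Real.cosh (x/2) * (x/2) - c * x * (Real.sinh (x/2) * (1/2))
          = c * (x/2) * Real.exp (-(x/2)) := by rw [← hcs]; ring
      nlinarith [hkey, h2, h3]
  have h0 : K 0 = 0 := by simp [hK]
  have := hmono (Set.self_mem_Ici) (Set.mem_Ici.mpr ht.le) ht
  rw [h0] at this
  simp only [hK] at this
  linarith

theorem Fc_div_t_strictAnti (c : ℝ) (hc : 1 ≤ c) :
    StrictAntiOn (fun t : ℝ => Real.log (1 + 2 * c * Real.sinh (t / 2)) / t)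
      (Set.Ioi (0 : ℝ)) := by
  apply strictAntiOn_of_deriv_neg (convex_Ioi 0)
  · have hDc : Continuous (fun t:ℝ => 1 + 2*c*Real.sinh (t/2)) := by continuity
    apply ContinuousOn.div
    · exact hDc.continuousOn.log fun x hx => (Dpos hc (le_of_lt hx)).ne'
    · exact continuousOn_id
    · intro x hx; exact ne_of_gt hx
  · intro x hx
    rw [interior_Ioi] at hx
    have hx' : (0:ℝ) < x := hx
    have hpos := Dpos hc hx'.le (t := x)
    have hD := hasDerivAt_D c x
    have hlog := hD.log hpos.ne'
    have hdiv := hlog.div (hasDerivAt_id' x) (ne_of_gt hx')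
    rw [(show HasDerivAt (fun t => Real.log (1 + 2 * c * Real.sinh (t / 2)) / t) _ x from hdiv).deriv]
    apply div_neg_of_neg_of_pos
    · have hkey := key_ineq hc hx
      rw [sub_neg, div_mul_eq_mul_div, div_lt_iff₀ hpos]
      nlinarith
    · positivity
end

section
/- For every c > 0 and every t > 0, log(1 + 2c·sinh(t/2)) ≤ (t² + (2c+1)t)/(2(t+1)). -/
-- key exp inequality: (2-t) * e^t ≤ 2 + t for t ≥ 0
lemma aux_exp (t : ℝ) (ht : 0 ≤ t) : (2 - t) * Real.exp t ≤ 2 + t := by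
  have key : ∀ x : ℝ, (1 - x) * Real.exp x ≤ 1 := by
    intro x
    have h1 : 1 - x ≤ Real.exp (-x) := by
      have := Real.add_one_le_exp (-x); linarith
    have h2 : (1 - x) * Real.exp x ≤ Real.exp (-x) * Real.exp x :=
      mul_le_mul_of_nonneg_right h1 (Real.exp_pos x).le
    rwa [← Real.exp_add, neg_add_cancel, Real.exp_zero] at h2
  have hd : ∀ x : ℝ, HasDerivAt (fun y => (2 + y) - (2 - y) * Real.exp y)
      (1 - (1 - x) * Real.exp x) x := by
    intro x
    have h1 : HasDerivAt (fun y : ℝ => 2 + y) 1 x := by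
      simpa using (hasDerivAt_id x).const_add 2
    have h2 : HasDerivAt (fun y : ℝ => 2 - y) (-1) x := by
      simpa using (hasDerivAt_id x).const_sub 2
    have h4 := h2.mul (Real.hasDerivAt_exp x)
    exact (h1.sub h4).congr_deriv (by ring)
  have mono : MonotoneOn (fun y => (2 + y) - (2 - y) * Real.exp y) (Set.Ici 0) := by
    apply monotoneOn_of_deriv_nonneg (convex_Ici 0)
    · exact (Continuous.continuousOn (by continuity))
    · intro x hx
      exact (hd x).differentiableAt.differentiableWithinAt
    · intro x hx
      rw [(hd x).deriv]
      have := key x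
      linarith
  have h0 : (0:ℝ) ∈ Set.Ici (0:ℝ) := Set.self_mem_Ici
  have := mono h0 (Set.mem_Ici.mpr ht) ht
  simp only [Real.exp_zero] at this
  linarith

theorem Fc_upper_rational_bound (c t : ℝ) (hc : 0 < c) (ht : 0 < t) :
    Real.log (1 + 2 * c * Real.sinh (t / 2)) ≤ (t ^ 2 + (2 * c + 1) * t) / (2 * (t + 1)) := by
  have ht1 : (0:ℝ) < t + 1 := by linarith
  have hs : 0 < Real.sinh (t / 2) := Real.sinh_pos_iff.mpr (by linarith)
  set s := Real.sinh (t / 2) with hsdef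
  have hts : t < 2 * s := by
    have := Real.self_lt_sinh_iff.mpr (show 0 < t / 2 by linarith)
    rw [← hsdef] at this; linarith
  have hE : Real.exp (-t) < 1 := by
    rw [Real.exp_lt_one_iff]; linarith
  have hEpos : 0 < Real.exp (-t) := Real.exp_pos _
  -- 2s = e^{t/2}(1 - e^{-t})
  have h2s : 2 * s = Real.exp (t / 2) * (1 - Real.exp (-t)) := by
    rw [hsdef, Real.sinh_eq]
    have : Real.exp (t / 2) * Real.exp (-t) = Real.exp (-(t / 2)) := by
      rw [← Real.exp_add]; ring_nf
    nlinarith [this]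
  set B := (t + 1) * (1 - Real.exp (-t)) / t with hBdef
  have hBpos : 0 < B := by
    apply div_pos _ ht
    apply mul_pos ht1
    linarith
  have hApos : 0 < 2 * s * (t + 1) / t := by positivity
  have hXpos : 0 < 1 + 2 * c * s := by positivity
  -- tangent line
  have tangent : Real.log (1 + 2 * c * s) ≤
      Real.log (2 * s * (t + 1) / t) + (1 + 2 * c * s) / (2 * s * (t + 1) / t) - 1 := by
    have h := Real.log_le_sub_one_of_pos (div_pos hXpos hApos)
    rw [Real.log_div (ne_of_gt hXpos) (ne_of_gt hApos)] at h
    linarith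
  -- log A = t/2 + log B
  have hA_eq : 2 * s * (t + 1) / t = Real.exp (t / 2) * B := by
    rw [hBdef]
    field_simp
    rw [h2s]
  have hlogA : Real.log (2 * s * (t + 1) / t) = t / 2 + Real.log B := by
    rw [hA_eq, Real.log_mul (Real.exp_ne_zero _) (ne_of_gt hBpos), Real.log_exp]
  have hlogB : Real.log B ≤ B - 1 := Real.log_le_sub_one_of_pos hBpos
  -- (1+2cs)/A = t/(2s(t+1)) + c t/(t+1)
  have hXA : (1 + 2 * c * s) / (2 * s * (t + 1) / t) =
      t / (2 * s * (t + 1)) + c * t / (t + 1) := by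
    field_simp
  -- t/(2s(t+1)) ≤ 1/(t+1)
  have hfrac : t / (2 * s * (t + 1)) ≤ 1 / (t + 1) := by
    rw [div_le_div_iff₀ (by positivity) ht1]
    nlinarith
  -- key: (1+t-t²) ≤ (t+1)² e^{-t}
  have hkey : 1 + t - t ^ 2 ≤ (t + 1) ^ 2 * Real.exp (-t) := by
    have h := aux_exp t ht.le
    have h2 : 2 - t ≤ (2 + t) * Real.exp (-t) := by
      have := mul_le_mul_of_nonneg_right h hEpos.le
      rw [mul_assoc, ← Real.exp_add, add_neg_cancel, Real.exp_zero, mul_one] at this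
      linarith
    nlinarith [sq_nonneg t, mul_le_mul_of_nonneg_left h2 (sq_nonneg (t + 1))]
  -- B ≤ 2 - 1/(t+1)
  have hB2 : B ≤ 2 - 1 / (t + 1) := by
    have h3 : (t + 1) * (1 - Real.exp (-t)) * (t + 1) ≤ 2 * t * (t + 1) - t := by
      nlinarith [hkey]
    rw [hBdef, div_le_iff₀ ht]
    have h4 : (2 - 1 / (t + 1)) * t = (2 * t * (t + 1) - t) / (t + 1) := by
      field_simp
    rw [h4, le_div_iff₀ ht1]
    linarith
  -- RHS equals t/2 + ct/(t+1)
  have hRHS : (t ^ 2 + (2 * c + 1) * t) / (2 * (t + 1)) = t / 2 + c * t / (t + 1) := by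
    field_simp
    ring
  rw [hRHS]
  calc Real.log (1 + 2 * c * s)
      ≤ Real.log (2 * s * (t + 1) / t) + (1 + 2 * c * s) / (2 * s * (t + 1) / t) - 1 := tangent
    _ = t / 2 + Real.log B + (t / (2 * s * (t + 1)) + c * t / (t + 1)) - 1 := by
        rw [hlogA, hXA]
    _ ≤ t / 2 + c * t / (t + 1) := by
        have := hlogB
        have := hfrac
        have := hB2
        linarith
end

section
/- For c ≥ 1 and t ≥ 0, (t/(t+1))·log c + t/2 ≤ log(1 + 2c·sinh(t/2)), with equality if and only if t = 0. -/
theorem Fc_lower_log_bound (c t : ℝ) (hc : 1 ≤ c) (ht : 0 ≤ t) :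
    (t / (t + 1)) * Real.log c + t / 2 ≤ Real.log (1 + 2 * c * Real.sinh (t / 2)) ∧
    ((t / (t + 1)) * Real.log c + t / 2 = Real.log (1 + 2 * c * Real.sinh (t / 2)) ↔ t = 0) := by
  have hc0 : (0:ℝ) < c := lt_of_lt_of_le one_pos hc
  rcases eq_or_lt_of_le ht with h0 | h0
  · subst h0
    simp
  · -- t > 0 : strict inequality
    have ht1 : (0:ℝ) < t + 1 := by linarith
    have hexp : t / (t + 1) ≤ 1 - Real.exp (-t) := by
      have h1 : t + 1 ≤ Real.exp t := Real.add_one_le_exp t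
      have h2 : Real.exp (-t) = 1 / Real.exp t := by
        rw [Real.exp_neg]; ring
      have h3 : Real.exp (-t) ≤ 1 / (t + 1) := by
        rw [h2]
        apply one_div_le_one_div_of_le ht1 h1
      have h4 : t / (t + 1) = 1 - 1 / (t + 1) := by field_simp; ring
      linarith
    have hw1 : (0:ℝ) ≤ Real.exp (-t) := (Real.exp_pos _).le
    have hw2 : (0:ℝ) ≤ 1 - Real.exp (-t) := by
      have : Real.exp (-t) ≤ 1 := Real.exp_le_one_iff.mpr (by linarith)
      linarith
    have hA : c ^ (t / (t + 1)) ≤ Real.exp (-t) + (1 - Real.exp (-t)) * c := by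
      have hgm := Real.geom_mean_le_arith_mean2_weighted hw1 hw2 zero_le_one hc0.le
        (by ring : Real.exp (-t) + (1 - Real.exp (-t)) = 1)
      have h1 : (1:ℝ) ^ Real.exp (-t) = 1 := Real.one_rpow _
      have hB : c ^ (t / (t + 1)) ≤ c ^ (1 - Real.exp (-t)) :=
        Real.rpow_le_rpow_of_exponent_le hc hexp
      calc c ^ (t / (t + 1)) ≤ c ^ (1 - Real.exp (-t)) := hB
        _ = (1:ℝ) ^ Real.exp (-t) * c ^ (1 - Real.exp (-t)) := by rw [h1, one_mul]
        _ ≤ Real.exp (-t) * 1 + (1 - Real.exp (-t)) * c := hgm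
        _ = Real.exp (-t) + (1 - Real.exp (-t)) * c := by ring
    have hstep : Real.exp (t / 2) * (Real.exp (-t) + (1 - Real.exp (-t)) * c)
        < 1 + 2 * c * Real.sinh (t / 2) := by
      rw [Real.sinh_eq]
      have e1 : Real.exp (t / 2) * Real.exp (-t) = Real.exp (-(t / 2)) := by
        rw [← Real.exp_add]; ring_nf
      have e1c : c * (Real.exp (t / 2) * Real.exp (-t)) = c * Real.exp (-(t / 2)) := by
        rw [e1]
      have e2 : Real.exp (-(t / 2)) < 1 := by
        rw [Real.exp_lt_one_iff]; linarith
      nlinarith [e1, e1c, e2]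
    have hpos : (0:ℝ) < c ^ (t / (t + 1)) * Real.exp (t / 2) := by positivity
    have hmain : c ^ (t / (t + 1)) * Real.exp (t / 2) < 1 + 2 * c * Real.sinh (t / 2) := by
      calc c ^ (t / (t + 1)) * Real.exp (t / 2)
          ≤ (Real.exp (-t) + (1 - Real.exp (-t)) * c) * Real.exp (t / 2) :=
            mul_le_mul_of_nonneg_right hA (Real.exp_pos _).le
        _ = Real.exp (t / 2) * (Real.exp (-t) + (1 - Real.exp (-t)) * c) := by ring
        _ < 1 + 2 * c * Real.sinh (t / 2) := hstep
    have key : (t / (t + 1)) * Real.log c + t / 2 < Real.log (1 + 2 * c * Real.sinh (t / 2)) := by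
      have hlog : Real.log (c ^ (t / (t + 1)) * Real.exp (t / 2))
          = (t / (t + 1)) * Real.log c + t / 2 := by
        rw [Real.log_mul (by positivity) (Real.exp_ne_zero _), Real.log_rpow hc0,
          Real.log_exp]
      rw [← hlog]
      exact Real.log_lt_log hpos hmain
    refine ⟨key.le, ?_, fun h => absurd h (by linarith)⟩
    intro h
    exact absurd h key.ne
end

section
/- For 0 < c ≤ 1 and t > 0, the strict inequality c·t/2 < log(1 + 2c·sinh(t/2)) holds. -/
theorem Fc_lower_bound_c_le_one (c t : ℝ) (hc0 : 0 < c) (hc1 : c ≤ 1) (ht : 0 < t) :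
    c * t / 2 < Real.log (1 + 2 * c * Real.sinh (t / 2)) := by
  set s := t / 2 with hs
  have hs0 : 0 < s := by positivity
  have hkey : Real.exp (c * s) < 1 + 2 * c * Real.sinh s := by
    have hconv := convexOn_exp.2 (Set.mem_univ (0 : ℝ)) (Set.mem_univ s)
      (by linarith : (0:ℝ) ≤ 1 - c) hc0.le (by ring)
    simp only [smul_eq_mul, mul_zero, zero_add, Real.exp_zero, mul_one] at hconv
    have h1 : (1 - c) * 1 + c * Real.exp s < 1 + 2 * c * Real.sinh s := by
      rw [Real.sinh_eq]
      have : Real.exp (-s) < 1 := by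
        rw [Real.exp_lt_one_iff]; linarith
      nlinarith
    calc Real.exp (c * s) ≤ (1 - c) * 1 + c * Real.exp s := by linarith [hconv]
      _ < _ := h1
  rw [show c * t / 2 = c * s by rw [hs]; ring]
  rw [Real.lt_log_iff_exp_lt (by linarith [Real.exp_pos (c * s)])]
  exact hkey
end

section
/- For all c > 0 and t > 0, log(1 + 2c·sinh(t/2)) < log(1 + c·t) + c·(e^t − 1). -/
theorem Fc_upper_exp_bound (c t : ℝ) (hc : 0 < c) (ht : 0 < t) :
    Real.log (1 + 2 * c * Real.sinh (t / 2)) <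
      Real.log (1 + c * t) + c * (Real.exp t - 1) := by
  have hx : (1:ℝ) < Real.exp (t / 2) := by have := Real.add_one_le_exp (t/2); nlinarith [Real.exp_pos (t/2)]
  have hxpos : 0 < Real.exp (t / 2) := by positivity
  -- 2 sinh(t/2) < e^t - 1
  have hsinh : 2 * Real.sinh (t / 2) < Real.exp t - 1 := by
    rw [Real.sinh_eq]
    have h1 : Real.exp (-(t/2)) = (Real.exp (t/2))⁻¹ := Real.exp_neg _
    have h2 : Real.exp t = Real.exp (t/2) * Real.exp (t/2) := by
      rw [← Real.exp_add]; ring_nf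
    rw [h1, h2]
    have hinv : (Real.exp (t/2))⁻¹ = 1 / Real.exp (t/2) := inv_eq_one_div _
    rw [hinv]
    have hne : Real.exp (t/2) ≠ 0 := ne_of_gt hxpos
    have heq : 2 * ((Real.exp (t/2) - 1 / Real.exp (t/2)) / 2)
        = (Real.exp (t/2) * Real.exp (t/2) - 1) / Real.exp (t/2) := by
      field_simp
    rw [heq]
    exact div_lt_self (by nlinarith) hx
  have hs : 0 < Real.sinh (t/2) := by
    rw [Real.sinh_eq]
    have h1 : Real.exp (-(t/2)) = (Real.exp (t/2))⁻¹ := Real.exp_neg _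
    have : (Real.exp (t/2))⁻¹ < 1 := by
      rw [inv_lt_one₀ hxpos]; exact hx
    rw [h1]; linarith
  have h1pos : (0:ℝ) < 1 + 2 * c * Real.sinh (t / 2) := by nlinarith
  have step1 : Real.log (1 + 2 * c * Real.sinh (t / 2)) <
      Real.log (1 + c * (Real.exp t - 1)) := by
    apply Real.log_lt_log h1pos
    nlinarith
  have step2 : Real.log (1 + c * (Real.exp t - 1)) ≤ c * (Real.exp t - 1) := by
    have := Real.log_le_sub_one_of_pos (x := 1 + c * (Real.exp t - 1)) (by nlinarith)
    linarith
  have step3 : 0 < Real.log (1 + c * t) := Real.log_pos (by nlinarith)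
  linarith
end

section
/- For all t ≥ 0, log(1 + 2·sinh(t/2)) ≤ t/2 + log(5/4), with equality if and only if t = 2·log 2. -/
theorem F1_upper_bound (t : ℝ) (ht : 0 ≤ t) :
    Real.log (1 + 2 * Real.sinh (t / 2)) ≤ t / 2 + Real.log (5 / 4) ∧
    (Real.log (1 + 2 * Real.sinh (t / 2)) = t / 2 + Real.log (5 / 4) ↔ t = 2 * Real.log 2) := by
  set x := t / 2 with hxdef
  have hx0 : 0 ≤ x := by positivity
  have hu : 1 ≤ Real.exp x := Real.one_le_exp hx0
  have hprod : Real.exp (-x) * Real.exp x = 1 := by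
    rw [← Real.exp_add]; simp
  have hepos := Real.exp_pos x
  have henpos := Real.exp_pos (-x)
  have hsinh : Real.sinh x = (Real.exp x - Real.exp (-x)) / 2 := Real.sinh_eq x
  have hpos : 0 < 1 + 2 * Real.sinh x := by
    have : 0 ≤ Real.sinh x := Real.sinh_nonneg_iff.mpr hx0
    linarith
  have hbpos : (0:ℝ) < 5 / 4 * Real.exp x := by positivity
  have hrhs : x + Real.log (5 / 4) = Real.log (5 / 4 * Real.exp x) := by
    rw [Real.log_mul (by norm_num) (Real.exp_ne_zero x), Real.log_exp]; ring
  have hle : 1 + 2 * Real.sinh x ≤ 5 / 4 * Real.exp x := by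
    rw [hsinh]
    nlinarith [sq_nonneg (Real.exp x - 2), hprod, henpos, hepos]
  constructor
  · have := Real.log_le_log hpos hle
    rw [hrhs]
    exact this
  · have hiff : Real.log (1 + 2 * Real.sinh x) = Real.log (5 / 4 * Real.exp x) ↔
        1 + 2 * Real.sinh x = 5 / 4 * Real.exp x := by
      constructor
      · intro h
        have := congrArg Real.exp h
        rwa [Real.exp_log hpos, Real.exp_log hbpos] at this
      · intro h; rw [h]
    have hrw : (Real.log (1 + 2 * Real.sinh x) = x + Real.log (5 / 4)) ↔
        1 + 2 * Real.sinh x = 5 / 4 * Real.exp x := by rw [hrhs]; exact hiff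
    rw [hrw]
    constructor
    · intro h
      rw [hsinh] at h
      have hsq : (Real.exp x - 2) ^ 2 = 0 := by nlinarith [hprod, henpos, hepos]
      have he2 : Real.exp x = 2 := by nlinarith [hsq]
      have : x = Real.log 2 := by
        rw [← Real.log_exp x, he2]
      rw [hxdef] at this; linarith
    · intro h
      have hx2 : x = Real.log 2 := by rw [hxdef]; linarith
      have he2 : Real.exp x = 2 := by rw [hx2, Real.exp_log]; norm_num
      have hen : Real.exp (-x) = 1 / 2 := by
        rw [Real.exp_neg, he2]; norm_num
      rw [hsinh, he2, hen]; norm_num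
end

section
/- Let G ⊂ ℝⁿ be a proper subdomain, c ≥ 1, and W(x,y) = log(1 + 2c·sinh(j_G(x,y)/2)). Then for all x, y ∈ G, L·j_G(x,y) ≤ W(x,y) ≤ U·j_G(x,y), where L = 1/2 + log(c)/(1 + j_G(x,y)) and U = (j_G(x,y) + 2c + 1)/(2(1 + j_G(x,y))). -/
/-- Lower pointwise bound: for `t ≥ 0`, `c ≥ 1`,
`(1/2 + log c/(1+t)) * t ≤ log (1 + 2 c sinh (t/2))`. -/
lemma W_lower_aux (c t : ℝ) (hc : 1 ≤ c) (ht : 0 ≤ t) :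
    (1 / 2 + Real.log c / (1 + t)) * t ≤ Real.log (1 + 2 * c * Real.sinh (t / 2)) := by
  have ht1 : (0:ℝ) < 1 + t := by linarith
  have hcpos : (0:ℝ) < c := by linarith
  set s := Real.sinh (t / 2) with hsdef
  have hsge : t / 2 ≤ s := Real.self_le_sinh_iff.2 (by linarith)
  have hsnn : 0 ≤ s := le_trans (by linarith) hsge
  set E := Real.exp (t / 2) with hE
  have hEpos : 0 < E := Real.exp_pos _
  have hE1 : 1 ≤ E := Real.one_le_exp (by linarith)
  have hs : s = (E - E⁻¹) / 2 := by
    rw [hsdef, Real.sinh_eq, Real.exp_neg]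
  have hinv1 : E⁻¹ ≤ 1 := inv_le_one_of_one_le₀ hE1
  -- step 1 : E ≤ 1 + 2 s
  have h1 : E ≤ 1 + 2 * s := by rw [hs]; linarith
  -- step 2 : (1+2s)(1+ct) ≤ (1+2cs)(1+t)
  have h2 : (1 + 2 * s) * (1 + c * t) ≤ (1 + 2 * c * s) * (1 + t) := by
    nlinarith [mul_nonneg (sub_nonneg.2 hc) (by linarith : (0:ℝ) ≤ 2 * s - t)]
  have hfracpos : (0:ℝ) < (1 + c * t) / (1 + t) := by positivity
  have h2' : E * ((1 + c * t) / (1 + t)) ≤ 1 + 2 * c * s := by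
    calc E * ((1 + c * t) / (1 + t)) ≤ (1 + 2 * s) * ((1 + c * t) / (1 + t)) := by
          apply mul_le_mul_of_nonneg_right h1 (le_of_lt hfracpos)
      _ = (1 + 2 * s) * (1 + c * t) / (1 + t) := by ring
      _ ≤ 1 + 2 * c * s := by
          rw [div_le_iff₀ ht1]; linarith
  -- step 3 : c^(t/(1+t)) ≤ (1+ct)/(1+t)
  have h3 : c ^ (t / (1 + t)) ≤ (1 + c * t) / (1 + t) := by
    have hw : 1 / (1 + t) + t / (1 + t) = 1 := by field_simp
    have := Real.geom_mean_le_arith_mean2_weighted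
      (by positivity : (0:ℝ) ≤ 1 / (1 + t)) (by positivity : (0:ℝ) ≤ t / (1 + t))
      (zero_le_one) (le_of_lt hcpos) hw
    calc c ^ (t / (1 + t)) = (1:ℝ) ^ (1 / (1 + t)) * c ^ (t / (1 + t)) := by
          rw [Real.one_rpow, one_mul]
      _ ≤ 1 / (1 + t) * 1 + t / (1 + t) * c := this
      _ = (1 + c * t) / (1 + t) := by field_simp
  -- combine via logs
  have hpos1 : (0:ℝ) < 1 + 2 * c * s := by nlinarith
  have l1 : Real.log (E * ((1 + c * t) / (1 + t))) ≤ Real.log (1 + 2 * c * s) :=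
    Real.log_le_log (by positivity) h2'
  have l2 : Real.log (E * ((1 + c * t) / (1 + t)))
      = t / 2 + Real.log ((1 + c * t) / (1 + t)) := by
    rw [Real.log_mul (ne_of_gt hEpos) (ne_of_gt hfracpos), hE, Real.log_exp]
  have l3 : t / (1 + t) * Real.log c ≤ Real.log ((1 + c * t) / (1 + t)) := by
    rw [← Real.log_rpow hcpos]
    exact Real.log_le_log (Real.rpow_pos_of_pos hcpos _) h3
  have : t / 2 + t / (1 + t) * Real.log c ≤ Real.log (1 + 2 * c * s) := by
    rw [l2] at l1; linarith
  calc (1 / 2 + Real.log c / (1 + t)) * t = t / 2 + t / (1 + t) * Real.log c := by ring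
    _ ≤ Real.log (1 + 2 * c * s) := this

/-- `(A)` : `1 - exp (-t) ≤ u * exp u` where `u = t/(1+t)`, `t ≥ 0`. -/
lemma W_aux_A (t : ℝ) (ht : 0 ≤ t) :
    1 - Real.exp (-t) ≤ t / (1 + t) * Real.exp (t / (1 + t)) := by
  have ht1 : (0:ℝ) < 1 + t := by linarith
  set u := t / (1 + t) with hu
  have hu0 : 0 ≤ u := by positivity
  have hexpu : (1 + u / 2) ^ 2 ≤ Real.exp u := by
    have h1 : 1 + u / 2 ≤ Real.exp (u / 2) := by
      have := Real.add_one_le_exp (u / 2); linarith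
    have h2 : Real.exp (u / 2) ^ 2 = Real.exp u := by
      rw [sq, ← Real.exp_add]; congr 1; ring
    calc (1 + u / 2) ^ 2 ≤ Real.exp (u / 2) ^ 2 := by
          apply pow_le_pow_left₀ (by linarith) h1
      _ = Real.exp u := h2
  have hmain : u * (1 + u / 2) ^ 2 ≤ u * Real.exp u :=
    mul_le_mul_of_nonneg_left hexpu hu0
  rcases le_or_gt t 2 with h2 | h2
  · -- small t : 1 - exp(-t) ≤ t - t²/4 ≤ u (1+u/2)²
    have ha : 1 - t / 2 ≤ Real.exp (-(t / 2)) := by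
      have := Real.add_one_le_exp (-(t / 2)); linarith
    have ha2 : (1 - t / 2) ^ 2 ≤ Real.exp (-t) := by
      have h := Real.exp_nonneg (-(t / 2))
      calc (1 - t / 2) ^ 2 ≤ Real.exp (-(t / 2)) ^ 2 := by
            apply pow_le_pow_left₀ (by linarith) ha
        _ = Real.exp (-t) := by rw [sq, ← Real.exp_add]; congr 1; ring
    have hsmall : 1 - Real.exp (-t) ≤ t - t ^ 2 / 4 := by nlinarith
    have hpoly : t - t ^ 2 / 4 ≤ u * (1 + u / 2) ^ 2 := by
      rw [hu]
      have expand : t / (1 + t) * (1 + t / (1 + t) / 2) ^ 2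
          = t * (2 * (1 + t) + t) ^ 2 / (4 * (1 + t) ^ 3) := by
        field_simp; ring
      rw [expand, le_div_iff₀ (by positivity : (0:ℝ) < 4 * (1 + t) ^ 3)]
      nlinarith [mul_nonneg (mul_nonneg ht ht) (mul_nonneg ht (sq_nonneg (t - 1))),
        mul_nonneg (mul_nonneg ht ht) (sq_nonneg (t - 1/2)), sq_nonneg t]
    linarith
  · -- large t : 1 - exp(-t) ≤ 1 ≤ u (1+u/2)²
    have hu23 : 2 / 3 ≤ u := by
      rw [hu, le_div_iff₀ ht1]; linarith
    have hone : (1:ℝ) ≤ u * (1 + u / 2) ^ 2 := by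
      nlinarith [sq_nonneg (u - 2/3), mul_nonneg (sub_nonneg.2 hu23) (sq_nonneg u)]
    have := Real.exp_nonneg (-t)
    linarith

/-- `(B)` : `exp(-(t/2)) + 1 - exp(-t) ≤ exp u` where `u = t/(1+t)`, `t ≥ 0`. -/
lemma W_aux_B (t : ℝ) (ht : 0 ≤ t) :
    Real.exp (-(t / 2)) + 1 - Real.exp (-t) ≤ Real.exp (t / (1 + t)) := by
  have ht1 : (0:ℝ) < 1 + t := by linarith
  set u := t / (1 + t) with hu
  set a := Real.exp (-(t / 2)) with ha
  have ha0 : 0 < a := Real.exp_pos _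
  have ha1 : a ≤ 1 := Real.exp_le_one_iff.2 (by linarith)
  have haa : a ^ 2 = Real.exp (-t) := by
    rw [ha, sq, ← Real.exp_add]; congr 1; ring
  have h1a : 1 - t / 2 ≤ a := by
    have := Real.add_one_le_exp (-(t / 2)); rw [← ha] at this; linarith
  have hexp : 1 + u ≤ Real.exp u := by
    have := Real.add_one_le_exp u; linarith
  have key : a - a ^ 2 ≤ u := by
    rcases le_or_gt t 1 with h1 | h1
    · have huge : t / 2 ≤ u := by
        rw [hu, le_div_iff₀ ht1]; nlinarith
      nlinarith
    · have huge : 1 / 2 ≤ u := by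
        rw [hu, le_div_iff₀ ht1]; linarith
      nlinarith [sq_nonneg (a - 1/2)]
  rw [← haa]
  linarith

/-- Upper pointwise bound. -/
lemma W_upper_aux (c t : ℝ) (hc : 1 ≤ c) (ht : 0 ≤ t) :
    Real.log (1 + 2 * c * Real.sinh (t / 2)) ≤ ((t + 2 * c + 1) / (2 * (1 + t))) * t := by
  have ht1 : (0:ℝ) < 1 + t := by linarith
  set u := t / (1 + t) with hu
  have hu0 : 0 ≤ u := by positivity
  set s := Real.sinh (t / 2) with hsdef
  have hsge : t / 2 ≤ s := Real.self_le_sinh_iff.2 (by linarith)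
  have hsnn : 0 ≤ s := le_trans (by linarith) hsge
  have hpos1 : (0:ℝ) < 1 + 2 * c * s := by nlinarith
  rw [show ((t + 2 * c + 1) / (2 * (1 + t))) * t = t / 2 + c * u by
    rw [hu]; field_simp; ring]
  rw [Real.log_le_iff_le_exp hpos1]
  -- key inequality : 1 + 2 c s ≤ exp(t/2) * exp(c u)
  set a := Real.exp (-(t / 2)) with ha
  have ha0 : 0 < a := Real.exp_pos _
  have haE : a * Real.exp (t / 2) = 1 := by
    rw [ha, ← Real.exp_add]; norm_num
  have haa : a ^ 2 = Real.exp (-t) := by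
    rw [ha, sq, ← Real.exp_add]; congr 1; ring
  have hs : s = (Real.exp (t / 2) - a) / 2 := by
    rw [hsdef, Real.sinh_eq, ha]
  have hA := W_aux_A t ht
  have hB := W_aux_B t ht
  rw [← hu] at hA hB
  have hAB : a + c * (1 - a ^ 2) ≤ Real.exp (c * u) := by
    have hsplit : Real.exp (c * u) = Real.exp u * Real.exp ((c - 1) * u) := by
      rw [← Real.exp_add]; ring_nf
    have hbern : 1 + (c - 1) * u ≤ Real.exp ((c - 1) * u) := by
      have := Real.add_one_le_exp ((c - 1) * u); linarith
    have hEu : 0 < Real.exp u := Real.exp_pos _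
    have h1 : Real.exp u * (1 + (c - 1) * u) ≤ Real.exp (c * u) := by
      rw [hsplit]
      exact mul_le_mul_of_nonneg_left hbern (le_of_lt hEu)
    have h2 : Real.exp u + (c - 1) * (u * Real.exp u) ≤ Real.exp (c * u) := by
      calc Real.exp u + (c - 1) * (u * Real.exp u) = Real.exp u * (1 + (c - 1) * u) := by ring
        _ ≤ Real.exp (c * u) := h1
    have h3 : (c - 1) * (1 - Real.exp (-t)) ≤ (c - 1) * (u * Real.exp u) :=
      mul_le_mul_of_nonneg_left hA (by linarith)
    rw [haa]
    have hBB : a + 1 - Real.exp (-t) ≤ Real.exp u := hB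
    nlinarith
  -- multiply by exp(t/2)
  have hE : 0 < Real.exp (t / 2) := Real.exp_pos _
  have hmul : Real.exp (t / 2) * (a + c * (1 - a ^ 2)) ≤ Real.exp (t / 2) * Real.exp (c * u) :=
    mul_le_mul_of_nonneg_left hAB (le_of_lt hE)
  have hlhs : Real.exp (t / 2) * (a + c * (1 - a ^ 2)) = 1 + 2 * c * s := by
    rw [hs]
    have hEa : Real.exp (t / 2) * a = 1 := by rw [mul_comm]; exact haE
    linear_combination (1 - c * a) * hEa
  have hrhs : Real.exp (t / 2) * Real.exp (c * u) = Real.exp (t / 2 + c * u) := by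
    rw [← Real.exp_add]
  rw [hlhs, hrhs] at hmul
  exact hmul

theorem W_jG_bounds {n : ℕ} (G : Set (EuclideanSpace ℝ (Fin n)))
    (hG : IsOpen G) (hGc : IsConnected G) (hGne : G ≠ Set.univ)
    (c : ℝ) (hc : 1 ≤ c)
    (jG : EuclideanSpace ℝ (Fin n) → EuclideanSpace ℝ (Fin n) → ℝ)
    (hj : ∀ x y, jG x y =
      Real.log (1 + dist x y / min (Metric.infDist x Gᶜ) (Metric.infDist y Gᶜ)))
    (x y : EuclideanSpace ℝ (Fin n)) (hx : x ∈ G) (hy : y ∈ G) :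
    (1 / 2 + Real.log c / (1 + jG x y)) * jG x y ≤
      Real.log (1 + 2 * c * Real.sinh (jG x y / 2)) ∧
    Real.log (1 + 2 * c * Real.sinh (jG x y / 2)) ≤
      ((jG x y + 2 * c + 1) / (2 * (1 + jG x y))) * jG x y := by
  have ht : 0 ≤ jG x y := by
    rw [hj]
    apply Real.log_nonneg
    have h0 : 0 ≤ dist x y / min (Metric.infDist x Gᶜ) (Metric.infDist y Gᶜ) :=
      div_nonneg dist_nonneg (le_min Metric.infDist_nonneg Metric.infDist_nonneg)
    linarith
  exact ⟨W_lower_aux c (jG x y) hc ht, W_upper_aux c (jG x y) hc ht⟩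
end

section
/- For each fixed t > 0, the function E_t(c) = e^{t/2}·e^{ct/(t+1)} − 1 − c·(e^{t/2} − e^{−t/2}) satisfies E_t(c) > 0 for all c > 0. -/
set_option maxHeartbeats 1000000

/-- Auxiliary: `1 - t^2/2 < (1+t) e^{-t}` for `t > 0`, via monotonicity. -/
lemma aux_poly (t : ℝ) (ht : 0 < t) : 1 - t ^ 2 / 2 < (1 + t) * Real.exp (-t) := by
  have key : ∀ x : ℝ, HasDerivAt (fun y => (1 + y) * Real.exp (-y) - 1 + y ^ 2 / 2)
      (x * (1 - Real.exp (-x))) x := by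
    intro x
    have h1 : HasDerivAt (fun y : ℝ => 1 + y) 1 x := (hasDerivAt_id x).const_add 1
    have h2 : HasDerivAt (fun y : ℝ => Real.exp (-y)) (-Real.exp (-x)) x := by
      simpa [Function.comp_def] using (Real.hasDerivAt_exp (-x)).comp x ((hasDerivAt_id x).neg)
    have h4 : HasDerivAt (fun y : ℝ => y ^ 2 / 2) x x := by
      simpa using ((hasDerivAt_pow 2 x).div_const 2)
    have h5 := ((h1.mul h2).sub_const 1).add h4
    exact h5.congr_deriv (by ring)
  have mono : StrictMonoOn (fun y => (1 + y) * Real.exp (-y) - 1 + y ^ 2 / 2) (Set.Ici 0) := by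
    apply strictMonoOn_of_deriv_pos (convex_Ici 0)
    · fun_prop
    · intro x hx
      rw [interior_Ici, Set.mem_Ioi] at hx
      rw [(key x).deriv]
      have hlt : Real.exp (-x) < 1 := by
        rw [Real.exp_lt_one_iff]; linarith
      nlinarith
  have h0 : (0 : ℝ) ∈ Set.Ici (0 : ℝ) := Set.mem_Ici.mpr le_rfl
  have htm : t ∈ Set.Ici (0 : ℝ) := Set.mem_Ici.mpr (le_of_lt ht)
  have := mono h0 htm ht
  simp at this
  nlinarith [this]

/-- Auxiliary: `2 x log x ≤ x² - 1` for `x ≥ 1`. -/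
lemma aux_log (x : ℝ) (hx : 1 ≤ x) : 2 * x * Real.log x ≤ x ^ 2 - 1 := by
  have hx0 : (0 : ℝ) < x := lt_of_lt_of_le one_pos hx
  have hy : 0 ≤ Real.log x := Real.log_nonneg hx
  have hsinh : Real.log x ≤ Real.sinh (Real.log x) := Real.self_le_sinh_iff.mpr hy
  rw [Real.sinh_eq] at hsinh
  rw [Real.exp_log hx0, Real.exp_neg, Real.exp_log hx0] at hsinh
  have hinv : x * x⁻¹ = 1 := mul_inv_cancel₀ (ne_of_gt hx0)
  have h2 := mul_le_mul_of_nonneg_left hsinh (le_of_lt hx0)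
  nlinarith [h2, hinv]

theorem E_t_pos (t : ℝ) (ht : 0 < t) (c : ℝ) (hc : 0 < c) :
    Real.exp (t / 2) * Real.exp (c * t / (t + 1)) - 1 -
      c * (Real.exp (t / 2) - Real.exp (-(t / 2))) > 0 := by
  have ht0 : t ≠ 0 := ne_of_gt ht
  have ht1 : (0 : ℝ) < t + 1 := by linarith
  have hE : (0 : ℝ) < Real.exp (-t) := Real.exp_pos _
  have hEh : (0 : ℝ) < Real.exp (t / 2) := Real.exp_pos _
  have hEmh : (0 : ℝ) < Real.exp (-(t / 2)) := Real.exp_pos _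
  have hprod : Real.exp (-t) * Real.exp t = 1 := by
    rw [← Real.exp_add]; simp
  have hprod2 : Real.exp (-(t / 2)) * Real.exp (t / 2) = 1 := by
    rw [← Real.exp_add]; simp
  -- `(t+1) e^{-t} < 1`
  have h1 : (t + 1) * Real.exp (-t) < 1 := by
    have := Real.add_one_lt_exp ht0
    nlinarith [Real.exp_pos t]
  set A : ℝ := (t + 1) / t * (1 - Real.exp (-t)) with hA
  clear_value A
  have hexpt1 : Real.exp (-t) < 1 := by rw [Real.exp_lt_one_iff]; linarith
  have hA1 : 1 < A := by
    rw [hA, div_mul_eq_mul_div, lt_div_iff₀ ht]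
    nlinarith
  have hA0 : 0 < A := lt_trans one_pos hA1
  set L : ℝ := Real.log A with hL
  clear_value L
  have hlogA : Real.exp L = A := by rw [hL]; exact Real.exp_log hA0
  -- identity: exp(t/2) * exp(-t) = exp(-(t/2))
  have hid : Real.exp (t / 2) * Real.exp (-t) = Real.exp (-(t / 2)) := by
    rw [← Real.exp_add]; ring_nf
  set S : ℝ := Real.exp (t / 2) - Real.exp (-(t / 2)) with hS
  clear_value S
  have hSA : Real.exp (t / 2) * A = (t + 1) / t * S := by
    rw [hA, hS, ← hid]; ring
  set x : ℝ := c * t / (t + 1) with hx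
  clear_value x
  -- tangent line bound
  have htang : Real.exp (t / 2) * A * (1 + x - L) ≤ Real.exp (t / 2) * Real.exp x := by
    have h := Real.add_one_le_exp (x - L)
    have hmul := mul_le_mul_of_nonneg_left h (le_of_lt (mul_pos hEh hA0))
    calc Real.exp (t / 2) * A * (1 + x - L)
        = Real.exp (t / 2) * A * (x - L + 1) := by ring
      _ ≤ Real.exp (t / 2) * A * Real.exp (x - L) := hmul
      _ = Real.exp (t / 2) * (Real.exp L * Real.exp (x - L)) := by rw [hlogA]; ring
      _ = Real.exp (t / 2) * Real.exp x := by rw [← Real.exp_add]; ring_nf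
  -- exp(t/2)*A*x = c*S
  have hxS : Real.exp (t / 2) * A * x = c * S := by
    rw [hSA, hx]; field_simp
  -- reduce to min value positivity
  have hred : Real.exp (t / 2) * A * (1 - L) - 1 ≤
      Real.exp (t / 2) * Real.exp x - 1 - c * S := by
    have : Real.exp (t / 2) * A * (1 + x - L) =
        Real.exp (t / 2) * A * (1 - L) + Real.exp (t / 2) * A * x := by ring
    rw [this, hxS] at htang
    linarith
  have hkey : (A - 1) ^ 2 < 2 * (1 - Real.exp (-(t / 2))) := by
    have hAm1 : (A - 1) * t = 1 - (t + 1) * Real.exp (-t) := by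
      rw [hA]; field_simp; ring
    have hApos : 0 < A - 1 := by linarith
    have hexp2 : Real.exp (-(t / 2)) * (2 + t) ≤ 2 := by
      have h := Real.add_one_le_exp (t / 2)
      nlinarith [hEmh, hprod2]
    rcases le_or_gt t (9 / 5) with hcase | hcase
    · -- small t : A - 1 < t/2
      have hsm : A - 1 < t / 2 := by
        have := aux_poly t ht
        have h2 : (A - 1) * t < t ^ 2 / 2 := by nlinarith
        nlinarith
      have hsq : (A - 1) ^ 2 < t ^ 2 / 4 := by nlinarith
      have ht2 : t ^ 2 ≤ 9 / 5 * t := by nlinarith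
      have ht3 : t ^ 3 ≤ 81 / 25 * t := by nlinarith
      nlinarith [hsq, hexp2, ht2, ht3, ht, hEmh]
    · -- large t : A - 1 < 1/t
      have hbig : (A - 1) * t < 1 := by
        rw [hAm1]; nlinarith [hE, ht]
      have h5 : A - 1 < 5 / 9 := by nlinarith [hApos, hcase, hbig]
      have hsq : (A - 1) ^ 2 < 25 / 81 := by nlinarith [hApos, h5]
      have hexp3 : Real.exp (-(t / 2)) ≤ 10 / 19 := by
        have h6 : Real.exp (-(t / 2)) * (19 / 5) ≤ Real.exp (-(t / 2)) * (2 + t) :=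
          mul_le_mul_of_nonneg_left (by linarith) (le_of_lt hEmh)
        linarith [hexp2, h6]
      linarith [hsq, hexp3]
  -- min value positive
  have hmin : 1 < Real.exp (t / 2) * A * (1 - L) := by
    have hlog2 : 2 * A * L ≤ A ^ 2 - 1 := by rw [hL]; exact aux_log A (le_of_lt hA1)
    have hq : 1 - (A - 1) ^ 2 / 2 ≤ A * (1 - L) := by nlinarith
    have hq2 : Real.exp (-(t / 2)) < 1 - (A - 1) ^ 2 / 2 := by nlinarith [hkey]
    calc (1 : ℝ) = Real.exp (t / 2) * Real.exp (-(t / 2)) := by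
          rw [← Real.exp_add]; simp
      _ < Real.exp (t / 2) * (1 - (A - 1) ^ 2 / 2) := by
          exact mul_lt_mul_of_pos_left hq2 hEh
      _ ≤ Real.exp (t / 2) * (A * (1 - L)) := by
          exact mul_le_mul_of_nonneg_left hq (le_of_lt hEh)
      _ = Real.exp (t / 2) * A * (1 - L) := by ring
  linarith [hred, hmin]
end
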